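/- Let G be a connected DAG without v-structures with at least 2 vertices, and let S be any subset of its arcs. Then there exists a subset S' of arcs of G such that: (1) the underlying undirected graph of G restricted to S' is a forest, (2) the set of endpoints of arcs in S' is a subset of the set of endpoints of arcs in S, and (3) S' can be obtained from S by repeatedly replacing, in each undirected cycle r → u₁ → ⋯ → u_k → s ← v_ℓ ← ⋯ ← v₁ ← r contained in S with r minimal and s maximal in a fixed topological order, an arc v_ℓ → s by an arc v_ℓ → u_k of G (or symmetrically), where the arc v_ℓ ∼ u_k is guaranteed to exist in G because G has no v-structures. -/

import Mathlib

variable {V : Type*}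

def Acyclic (G : V → V → Prop) : Prop := ∀ v, ¬ Relation.TransGen G v v

def NoVStructure (G : V → V → Prop) : Prop :=
  ∀ u v w, u ≠ w → G u v → G w v → (G u w ∨ G w u)

def ConnectedUndirected (G : V → V → Prop) : Prop :=
  ∀ u v, Relation.ReflTransGen (fun a b => G a b ∨ G b a) u v

/-- One replacement step: two arcs `vl → s` and `uk → s` into a common vertex
`s`; since `G` has no v-structures the edge `vl ∼ uk` exists in `G`, and we
replace the arc into `s` by the corresponding arc between the two in-neighbors. -/
def ReplaceStep [DecidableEq V] (G : V → V → Prop) (S₁ S₂ : Finset (V × V)) : Prop :=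
  ∃ vl uk s : V, (vl, s) ∈ S₁ ∧ (uk, s) ∈ S₁ ∧ vl ≠ uk ∧
    ((G vl uk ∧ S₂ = insert (vl, uk) (S₁.erase (vl, s))) ∨
     (G uk vl ∧ S₂ = insert (uk, vl) (S₁.erase (uk, s))))

theorem stmt14 [Fintype V] [DecidableEq V] (G : V → V → Prop)
    (hacyc : Acyclic G) (hnv : NoVStructure G) (hconn : ConnectedUndirected G)
    (hcard : 2 ≤ Fintype.card V)
    (S : Finset (V × V)) (hS : ∀ e ∈ S, G e.1 e.2) :
    ∃ S' : Finset (V × V),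
      Relation.ReflTransGen (ReplaceStep G) S S' ∧
      (∀ e ∈ S', G e.1 e.2) ∧
      (SimpleGraph.fromRel (fun a b => (a, b) ∈ S')).IsAcyclic ∧
      (∀ x : V, (∃ y, (x, y) ∈ S' ∨ (y, x) ∈ S') → (∃ y, (x, y) ∈ S ∨ (y, x) ∈ S)) := by
  classical
  -- topological potential
  set π : V → ℕ := fun v => (Finset.univ.filter (fun u => Relation.TransGen G u v)).card with hπdef
  have hπ : ∀ u v, G u v → π u < π v := by
    intro u v huv
    apply Finset.card_lt_card
    constructor
    · intro w hw
      simp only [Finset.mem_filter, Finset.mem_univ, true_and] at hw ⊢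
      exact hw.trans (Relation.TransGen.single huv)
    · intro hsub
      have hu : u ∈ Finset.univ.filter (fun w => Relation.TransGen G w v) := by
        simp [Relation.TransGen.single huv]
      have := hsub hu
      simp only [Finset.mem_filter, Finset.mem_univ, true_and] at this
      exact hacyc u this
  -- key: forests from low in-degree sets
  have forest : ∀ T : Finset (V × V), (∀ e ∈ T, G e.1 e.2) →
      (∀ a b s : V, (a, s) ∈ T → (b, s) ∈ T → a = b) →
      (SimpleGraph.fromRel (fun a b => (a, b) ∈ T)).IsAcyclic := by
    intro T hT hdeg x c hc
    -- pick a π-maximal vertex of the cycle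
    obtain ⟨v, hv, hvmax⟩ := Finset.exists_max_image c.support.toFinset π
      ⟨x, by simp [SimpleGraph.Walk.start_mem_support]⟩
    rw [List.mem_toFinset] at hv
    have hvmax' : ∀ y ∈ c.support, π y ≤ π v := fun y hy => hvmax y (List.mem_toFinset.2 hy)
    have hc' := hc.rotate hv
    set c' := c.rotate v hv with hc'def
    have hsub : ∀ y ∈ c'.support, y ∈ c.support := by
      intro y hy
      rw [c'.support_eq_cons] at hy
      rcases List.mem_cons.1 hy with h | h
      · simpa [h] using hv
      · have := (SimpleGraph.Walk.support_rotate c v hv).mem_iff.1 h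
        rw [c.support_eq_cons]
        exact List.mem_cons_of_mem _ this
    obtain ⟨a, hadj, p, hp⟩ := SimpleGraph.Walk.not_nil_iff.1 hc'.not_nil
    -- the in-arc lemma: any cycle-neighbor of v gives an arc into v
    have arcin : ∀ z, (SimpleGraph.fromRel (fun a b => (a, b) ∈ T)).Adj v z →
        z ∈ c.support → (z, v) ∈ T := by
      intro z hz hzc
      rw [SimpleGraph.fromRel_adj] at hz
      rcases hz.2 with h | h
      · exact absurd (hvmax' z hzc) (not_le.2 (hπ v z (hT _ h)))
      · exact h
    have hpa : p.support ⊆ c'.support := by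
      rw [hp, SimpleGraph.Walk.support_cons]
      exact fun y hy => List.mem_cons_of_mem _ hy
    have haT : (a, v) ∈ T :=
      arcin a hadj (hsub _ (hpa p.start_mem_support))
    -- last edge of the cycle
    have hpnil : ¬ p.reverse.Nil := SimpleGraph.Walk.not_nil_of_ne hadj.ne
    obtain ⟨b, hadj₂, q, hq⟩ := SimpleGraph.Walk.not_nil_iff.1 hpnil
    have hbp : b ∈ p.support := by
      have : b ∈ p.reverse.support := by
        rw [hq, SimpleGraph.Walk.support_cons]
        exact List.mem_cons_of_mem _ q.start_mem_support
      rwa [SimpleGraph.Walk.support_reverse, List.mem_reverse] at this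
    have hbT : (b, v) ∈ T := arcin b hadj₂ (hsub _ (hpa hbp))
    have hab : a = b := hdeg a b v haT hbT
    -- edge s(v,a) appears twice
    have hmem : s(v, a) ∈ p.edges := by
      have : s(v, b) ∈ p.reverse.edges := by
        rw [hq, SimpleGraph.Walk.edges_cons]; exact List.mem_cons_self
      rw [SimpleGraph.Walk.edges_reverse, List.mem_reverse, ← hab] at this
      exact this
    have htrail := hc'.isCircuit.isTrail
    rw [hp, SimpleGraph.Walk.isTrail_cons] at htrail
    exact htrail.2 hmem
  -- main strong induction on the potential
  have key : ∀ n : ℕ, ∀ T : Finset (V × V), (∑ e ∈ T, (π e.1 + π e.2)) ≤ n →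
      (∀ e ∈ T, G e.1 e.2) →
      ∃ S' : Finset (V × V),
        Relation.ReflTransGen (ReplaceStep G) T S' ∧
        (∀ e ∈ S', G e.1 e.2) ∧
        (SimpleGraph.fromRel (fun a b => (a, b) ∈ S')).IsAcyclic ∧
        (∀ x : V, (∃ y, (x, y) ∈ S' ∨ (y, x) ∈ S') → (∃ y, (x, y) ∈ T ∨ (y, x) ∈ T)) := by
    intro n
    induction n using Nat.strong_induction_on with
    | _ n ih =>
      intro T hTn hT
      by_cases hdeg : ∀ a b s : V, (a, s) ∈ T → (b, s) ∈ T → a = b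
      · exact ⟨T, Relation.ReflTransGen.refl, hT, forest T hT hdeg, fun x hx => hx⟩
      · push_neg at hdeg
        obtain ⟨a, b, s, haT, hbT, hab⟩ := hdeg
        -- we build the next set, by symmetry handle both orientations uniformly
        have step : ∀ a b : V, (a, s) ∈ T → (b, s) ∈ T → a ≠ b → G a b →
            ∃ S' : Finset (V × V),
              Relation.ReflTransGen (ReplaceStep G) T S' ∧
              (∀ e ∈ S', G e.1 e.2) ∧
              (SimpleGraph.fromRel (fun a b => (a, b) ∈ S')).IsAcyclic ∧
              (∀ x : V, (∃ y, (x, y) ∈ S' ∨ (y, x) ∈ S') →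
                (∃ y, (x, y) ∈ T ∨ (y, x) ∈ T)) := by
          intro a b haT hbT hab hGab
          set T₂ : Finset (V × V) := insert (a, b) (T.erase (a, s)) with hT₂
          have hT₂G : ∀ e ∈ T₂, G e.1 e.2 := by
            intro e he
            rcases Finset.mem_insert.1 he with h | h
            · subst h; exact hGab
            · exact hT e (Finset.mem_of_mem_erase h)
          have hπbs : π b < π s := hπ b s (hT _ hbT)
          have herase : (∑ e ∈ T.erase (a, s), (π e.1 + π e.2)) + (π a + π s)
              = ∑ e ∈ T, (π e.1 + π e.2) :=
            Finset.sum_erase_add T _ haT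
          have hlt : (∑ e ∈ T₂, (π e.1 + π e.2)) < ∑ e ∈ T, (π e.1 + π e.2) := by
            by_cases hmem : (a, b) ∈ T.erase (a, s)
            · rw [hT₂, Finset.insert_eq_self.2 hmem]
              omega
            · rw [hT₂, Finset.sum_insert hmem]
              simp only
              omega
          obtain ⟨S', hrt, hG', hforest, hend⟩ :=
            ih (∑ e ∈ T₂, (π e.1 + π e.2)) (lt_of_lt_of_le hlt hTn) T₂ le_rfl hT₂G
          refine ⟨S', Relation.ReflTransGen.head ?_ hrt, hG', hforest, ?_⟩
          · exact ⟨a, b, s, haT, hbT, hab, Or.inl ⟨hGab, rfl⟩⟩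
          · intro x hx
            obtain ⟨y, hy⟩ := hend x hx
            rcases hy with hy | hy
            · rcases Finset.mem_insert.1 hy with h | h
              · have hxa : x = a := congrArg Prod.fst h
                exact ⟨s, Or.inl (hxa ▸ haT)⟩
              · exact ⟨y, Or.inl (Finset.mem_of_mem_erase h)⟩
            · rcases Finset.mem_insert.1 hy with h | h
              · have hxb : x = b := congrArg Prod.snd h
                exact ⟨s, Or.inl (hxb ▸ hbT)⟩
              · exact ⟨y, Or.inr (Finset.mem_of_mem_erase h)⟩
        rcases hnv a s b hab (hT _ haT) (hT _ hbT) with h | h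
        · exact step a b haT hbT hab h
        · exact step b a hbT haT hab.symm h
  exact key _ S le_rfl hS
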